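/- Let g : (ℝ₊)⁵ → ℝ₊ satisfy: for all Q, P, V, w, T > 0 and all S, U, τ, A > 0, g(S·Q, S⁻¹·U·A⁻¹·P, S·τ⁻¹·V, τ⁻¹·A²·w, τ·T) = A · g(Q, P, V, w, T). Fix λ, μ ∈ ℝ with λ ≠ 0, and set x = λ·(−1, 0, 1, 0, 1) and y = (1/2, 0, −1/2, 1/2, 0) + μ·(1, 0, −1, 0, −1). Then there exists a function f : ℝ₊ → ℝ₊ such that for all Q, P, V, w, T > 0, g(Q, P, V, w, T) = Q^{y₁}·P^{y₂}·V^{y₃}·w^{y₄}·T^{y₅} · f(Q^{x₁}·P^{x₂}·V^{x₃}·w^{x₄}·T^{x₅}). -/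

import Mathlib

/-- The general form of the market impact with execution horizon `T`: for any fixed
nonzero kernel solution `x = lam • (-1, 0, 1, 0, 1)` and any solution
`y = (1/2, 0, -1/2, 1/2, 0) + mu • (1, 0, -1, 0, -1)` of the inhomogeneous system,
there is `f` with `g = Q^y₁ P^y₂ V^y₃ w^y₄ T^y₅ * f (Q^x₁ P^x₂ V^x₃ w^x₄ T^x₅)`. -/
theorem market_impact_general_time (g : ℝ → ℝ → ℝ → ℝ → ℝ → ℝ)
    (hg_pos : ∀ Q P V w T : ℝ, 0 < Q → 0 < P → 0 < V → 0 < w → 0 < T →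
      0 < g Q P V w T)
    (hg_inv : ∀ Q P V w T S U τ A : ℝ, 0 < Q → 0 < P → 0 < V → 0 < w → 0 < T →
      0 < S → 0 < U → 0 < τ → 0 < A →
      g (S * Q) (S⁻¹ * U * A⁻¹ * P) (S * τ⁻¹ * V) (τ⁻¹ * A ^ 2 * w) (τ * T)
        = A * g Q P V w T)
    (lam mu : ℝ) (hlam : lam ≠ 0) :
    ∃ f : ℝ → ℝ, (∀ z : ℝ, 0 < z → 0 < f z) ∧
      ∀ Q P V w T : ℝ, 0 < Q → 0 < P → 0 < V → 0 < w → 0 < T →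
        g Q P V w T
          = Q ^ ((1 : ℝ) / 2 + mu) * P ^ (0 : ℝ) * V ^ (-(1 : ℝ) / 2 - mu)
              * w ^ ((1 : ℝ) / 2) * T ^ (-mu)
            * f (Q ^ (-lam) * P ^ (0 : ℝ) * V ^ lam * w ^ (0 : ℝ) * T ^ lam) := by
  classical
  refine ⟨fun u => if 0 < u then
      u ^ (((1:ℝ)/2 + mu)/lam) * g 1 1 (u ^ ((1:ℝ)/lam)) 1 1 else 1, ?_, ?_⟩
  · intro z hz
    simp only [if_pos hz]
    exact mul_pos (Real.rpow_pos_of_pos hz _)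
      (hg_pos _ _ _ _ _ one_pos one_pos (Real.rpow_pos_of_pos hz _) one_pos one_pos)
  · intro Q P V w T hQ hP hV hw hT
    set z0 : ℝ := Q⁻¹ * T * V with hz0def
    have hz0 : 0 < z0 := by positivity
    set A : ℝ := (w * T) ^ (-(1:ℝ)/2) with hAdef
    have hA : 0 < A := Real.rpow_pos_of_pos (by positivity) _
    have hA2 : A ^ 2 = (w * T)⁻¹ := by
      rw [hAdef, ← Real.rpow_natCast ((w*T) ^ (-(1:ℝ)/2)) 2,
        ← Real.rpow_mul (by positivity)]
      norm_num [Real.rpow_neg_one]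
    have key := hg_inv Q P V w T Q⁻¹ (Q⁻¹ * A * P⁻¹) T⁻¹ A hQ hP hV hw hT
      (by positivity) (by positivity) (by positivity) hA
    have e1 : Q⁻¹ * Q = 1 := inv_mul_cancel₀ hQ.ne'
    have e2 : (Q⁻¹)⁻¹ * (Q⁻¹ * A * P⁻¹) * A⁻¹ * P = 1 := by
      field_simp
    have e3 : Q⁻¹ * (T⁻¹)⁻¹ * V = z0 := by rw [inv_inv, hz0def]
    have e4 : (T⁻¹)⁻¹ * A ^ 2 * w = 1 := by
      rw [inv_inv, hA2]; field_simp
    have e5 : T⁻¹ * T = 1 := inv_mul_cancel₀ hT.ne'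
    rw [e1, e2, e3, e4, e5] at key
    -- key : g 1 1 z0 1 1 = A * g Q P V w T
    have hgval : g Q P V w T = A⁻¹ * g 1 1 z0 1 1 := by
      field_simp at key ⊢
      linarith [key]
    -- simplify the argument of f
    have harg : Q ^ (-lam) * P ^ (0:ℝ) * V ^ lam * w ^ (0:ℝ) * T ^ lam = z0 ^ lam := by
      rw [hz0def, Real.mul_rpow (by positivity) hV.le,
        Real.mul_rpow (by positivity) hT.le,
        Real.inv_rpow hQ.le, ← Real.rpow_neg hQ.le]
      simp [Real.rpow_zero]
      ring
    rw [harg]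
    have hfz : (0:ℝ) < z0 ^ lam := Real.rpow_pos_of_pos hz0 _
    simp only [if_pos hfz]
    have hp1 : (z0 ^ lam) ^ (((1:ℝ)/2 + mu)/lam) = z0 ^ ((1:ℝ)/2 + mu) := by
      rw [← Real.rpow_mul hz0.le]
      congr 1
      field_simp
    have hp2 : (z0 ^ lam) ^ ((1:ℝ)/lam) = z0 := by
      rw [← Real.rpow_mul hz0.le]
      rw [mul_one_div, div_self hlam, Real.rpow_one]
    rw [hp1, hp2]
    rw [hgval]
    -- now pure rpow algebra
    have hAinv : A⁻¹ = w ^ ((1:ℝ)/2) * T ^ ((1:ℝ)/2) := by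
      rw [hAdef, ← Real.rpow_neg_one, ← Real.rpow_mul (by positivity),
        Real.mul_rpow hw.le hT.le]
      norm_num
    have hz0p : z0 ^ ((1:ℝ)/2 + mu)
        = (Q ^ ((1:ℝ)/2 + mu))⁻¹ * T ^ ((1:ℝ)/2 + mu) * V ^ ((1:ℝ)/2 + mu) := by
      rw [hz0def, Real.mul_rpow (by positivity) hV.le,
        Real.mul_rpow (by positivity) hT.le, Real.inv_rpow hQ.le]
    have hV1 : V ^ (-(1:ℝ)/2 - mu) = (V ^ ((1:ℝ)/2 + mu))⁻¹ := by
      rw [show (-(1:ℝ)/2 - mu) = -((1:ℝ)/2 + mu) by ring, Real.rpow_neg hV.le]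
    have hT1 : T ^ ((1:ℝ)/2 + mu) = T ^ ((1:ℝ)/2) * T ^ mu := by
      rw [← Real.rpow_add hT]
    have hT2 : T ^ (-mu) = (T ^ mu)⁻¹ := Real.rpow_neg hT.le mu
    rw [hAinv, hz0p, hV1, hT1, hT2, Real.rpow_zero]
    have h1 : (0:ℝ) < Q ^ ((1:ℝ)/2 + mu) := Real.rpow_pos_of_pos hQ _
    have h2 : (0:ℝ) < V ^ ((1:ℝ)/2 + mu) := Real.rpow_pos_of_pos hV _
    have h3 : (0:ℝ) < T ^ mu := Real.rpow_pos_of_pos hT _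
    field_simp
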